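/- arXiv:2508.16094 — 5 statements merged into one kernel-verified Lean document; each statement's English description precedes it below -/
import Mathlib

section
/- Let H be an n×n real positive definite matrix, G an m×m real positive definite matrix, and B an m×n real matrix. Then the symmetric quasidefinite matrix K = [[H, Bᵀ], [B, −G]] has inertia (n, m, 0): exactly n of its eigenvalues (counted with multiplicity) are positive, exactly m are negative, and none are zero. -/
open Matrix

section Aux

variable {ι : Type*} [Fintype ι] [DecidableEq ι]

/-- Quadratic form of a real symmetric matrix expanded in its eigenbasis. -/
lemma quad_eq_sum_eigen {K : Matrix ι ι ℝ} (hK : K.IsHermitian) (v : ι → ℝ) :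
    v ⬝ᵥ (K *ᵥ v) = ∑ i, hK.eigenvalues i * (⇑(hK.eigenvectorBasis i) ⬝ᵥ v) ^ 2 := by
  set V : Matrix ι ι ℝ := (hK.eigenvectorUnitary : Matrix ι ι ℝ) with hV
  set c : ι → ℝ := star V *ᵥ v with hc
  have hcc : ∀ i, c i = ⇑(hK.eigenvectorBasis i) ⬝ᵥ v := by
    intro i
    simp [hc, mulVec, dotProduct, Matrix.star_apply, hV]
  have hvV : v ᵥ* V = c := by
    funext i
    simp [vecMul, mulVec, dotProduct, Matrix.star_apply, hc, hV, mul_comm]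
  have key : v ⬝ᵥ (K *ᵥ v) = ∑ i, hK.eigenvalues i * (c i) ^ 2 := by
    calc v ⬝ᵥ (K *ᵥ v)
        = v ⬝ᵥ (V *ᵥ (diagonal (RCLike.ofReal ∘ hK.eigenvalues) *ᵥ (star V *ᵥ v))) := by
          conv_lhs => rw [hK.spectral_theorem, Unitary.conjStarAlgAut_apply]
          rw [← mulVec_mulVec, ← mulVec_mulVec]
      _ = c ⬝ᵥ (diagonal (RCLike.ofReal ∘ hK.eigenvalues) *ᵥ c) := by
          rw [dotProduct_mulVec, hvV, ← hc]
      _ = ∑ i, hK.eigenvalues i * (c i) ^ 2 := by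
          simp only [dotProduct, mulVec_diagonal, Function.comp_apply, RCLike.ofReal_real_eq_id,
            id_eq]
          exact Finset.sum_congr rfl fun i _ => by ring
  rw [key]
  exact Finset.sum_congr rfl fun i _ => by rw [hcc]

/-- If the quadratic form of a real symmetric matrix is positive on the image of an
injective linear map from `Fin k → ℝ`, then it has at least `k` positive eigenvalues. -/
lemma card_pos_ge {K : Matrix ι ι ℝ} (hK : K.IsHermitian) {k : ℕ}
    (φ : (Fin k → ℝ) →ₗ[ℝ] (ι → ℝ)) (hφ : Function.Injective φ)
    (hQ : ∀ x : Fin k → ℝ, x ≠ 0 → 0 < φ x ⬝ᵥ (K *ᵥ φ x)) :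
    k ≤ (Finset.univ.filter fun i => 0 < hK.eigenvalues i).card := by
  classical
  let L : (ι → ℝ) →ₗ[ℝ] ({i : ι // 0 < hK.eigenvalues i} → ℝ) :=
    { toFun := fun v j => ⇑(hK.eigenvectorBasis j.1) ⬝ᵥ v
      map_add' := by intro v w; funext j; simp [dotProduct_add]
      map_smul' := by intro c v; funext j; simp [dotProduct_smul] }
  have hinj : Function.Injective (L.comp φ) := by
    rw [← LinearMap.ker_eq_bot, LinearMap.ker_eq_bot']
    intro x hx
    by_contra hx0
    have hq := hQ x hx0
    rw [quad_eq_sum_eigen hK] at hq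
    have hle : ∑ i, hK.eigenvalues i * (⇑(hK.eigenvectorBasis i) ⬝ᵥ φ x) ^ 2 ≤ 0 := by
      apply Finset.sum_nonpos
      intro i _
      by_cases hi : 0 < hK.eigenvalues i
      · have h0 : ⇑(hK.eigenvectorBasis i) ⬝ᵥ φ x = 0 := by
          have := congrFun hx ⟨i, hi⟩
          simpa [L] using this
        simp [h0]
      · have h1 : hK.eigenvalues i ≤ 0 := le_of_not_gt hi
        nlinarith [sq_nonneg (⇑(hK.eigenvectorBasis i) ⬝ᵥ φ x)]
    linarith
  have h1 := LinearMap.finrank_le_finrank_of_injective hinj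
  simpa [Module.finrank_pi, Fintype.card_subtype] using h1

/-- If the quadratic form of a real symmetric matrix is negative on the image of an
injective linear map from `Fin k → ℝ`, then it has at least `k` negative eigenvalues. -/
lemma card_neg_ge {K : Matrix ι ι ℝ} (hK : K.IsHermitian) {k : ℕ}
    (φ : (Fin k → ℝ) →ₗ[ℝ] (ι → ℝ)) (hφ : Function.Injective φ)
    (hQ : ∀ x : Fin k → ℝ, x ≠ 0 → φ x ⬝ᵥ (K *ᵥ φ x) < 0) :
    k ≤ (Finset.univ.filter fun i => hK.eigenvalues i < 0).card := by
  classical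
  let L : (ι → ℝ) →ₗ[ℝ] ({i : ι // hK.eigenvalues i < 0} → ℝ) :=
    { toFun := fun v j => ⇑(hK.eigenvectorBasis j.1) ⬝ᵥ v
      map_add' := by intro v w; funext j; simp [dotProduct_add]
      map_smul' := by intro c v; funext j; simp [dotProduct_smul] }
  have hinj : Function.Injective (L.comp φ) := by
    rw [← LinearMap.ker_eq_bot, LinearMap.ker_eq_bot']
    intro x hx
    by_contra hx0
    have hq := hQ x hx0
    rw [quad_eq_sum_eigen hK] at hq
    have hle : 0 ≤ ∑ i, hK.eigenvalues i * (⇑(hK.eigenvectorBasis i) ⬝ᵥ φ x) ^ 2 := by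
      apply Finset.sum_nonneg
      intro i _
      by_cases hi : hK.eigenvalues i < 0
      · have h0 : ⇑(hK.eigenvectorBasis i) ⬝ᵥ φ x = 0 := by
          have := congrFun hx ⟨i, hi⟩
          simpa [L] using this
        simp [h0]
      · have h1 : 0 ≤ hK.eigenvalues i := le_of_not_gt hi
        positivity
    linarith
  have h1 := LinearMap.finrank_le_finrank_of_injective hinj
  simpa [Module.finrank_pi, Fintype.card_subtype] using h1

end Aux

/-- An SQD matrix `K = [[H, Bᵀ], [B, −G]]` with `H` (size `n`) and `G` (size `m`)
positive definite has inertia `(n, m, 0)`. -/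
theorem sqd_inertia (n m : ℕ)
    (H : Matrix (Fin n) (Fin n) ℝ) (G : Matrix (Fin m) (Fin m) ℝ)
    (B : Matrix (Fin m) (Fin n) ℝ)
    (hH : H.PosDef) (hG : G.PosDef)
    (hK : (Matrix.fromBlocks H Bᵀ B (-G)).IsHermitian) :
    (Finset.univ.filter fun i => 0 < hK.eigenvalues i).card = n ∧
    (Finset.univ.filter fun i => hK.eigenvalues i < 0).card = m ∧
    (Finset.univ.filter fun i => hK.eigenvalues i = 0).card = 0 := by
  classical
  have hHdet : IsUnit H.det := isUnit_iff_ne_zero.2 hH.det_pos.ne'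
  have hHinv : (H⁻¹).PosDef := hH.inv
  -- the positive subspace {(x, 0)}
  let φp : (Fin n → ℝ) →ₗ[ℝ] (Fin n ⊕ Fin m → ℝ) :=
    { toFun := fun x => Sum.elim x 0
      map_add' := by intro v w; funext i; cases i <;> simp
      map_smul' := by intro c v; funext i; cases i <;> simp }
  have hp : n ≤ (Finset.univ.filter fun i => 0 < hK.eigenvalues i).card := by
    refine card_pos_ge hK φp ?_ ?_
    · intro x y hxy
      funext i
      exact congrFun hxy (Sum.inl i)
    · intro x hx
      have hQ : φp x ⬝ᵥ (fromBlocks H Bᵀ B (-G) *ᵥ φp x) = x ⬝ᵥ (H *ᵥ x) := by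
        show Sum.elim x (0 : Fin m → ℝ) ⬝ᵥ
          (fromBlocks H Bᵀ B (-G) *ᵥ Sum.elim x (0 : Fin m → ℝ)) = _
        rw [fromBlocks_mulVec, sumElim_dotProduct_sumElim]
        simp [Sum.elim_comp_inl, Sum.elim_comp_inr]
      rw [hQ]
      simpa using hH.dotProduct_mulVec_pos hx
  -- the negative subspace {(-H⁻¹Bᵀ y, y)}
  let φm : (Fin m → ℝ) →ₗ[ℝ] (Fin n ⊕ Fin m → ℝ) :=
    { toFun := fun y => Sum.elim (-(H⁻¹ *ᵥ (Bᵀ *ᵥ y))) y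
      map_add' := by
        intro v w
        funext i
        cases i <;> simp [mulVec_add, neg_add] <;> ring
      map_smul' := by
        intro c v
        funext i
        cases i <;> simp [mulVec_smul] }
  have hm : m ≤ (Finset.univ.filter fun i => hK.eigenvalues i < 0).card := by
    refine card_neg_ge hK φm ?_ ?_
    · intro x y hxy
      funext j
      exact congrFun hxy (Sum.inr j)
    · intro y hy
      set z : Fin n → ℝ := Bᵀ *ᵥ y with hz
      set a : Fin n → ℝ := -(H⁻¹ *ᵥ z) with ha
      have hHa : H *ᵥ a = -z := by
        rw [ha, mulVec_neg, mulVec_mulVec, Matrix.mul_nonsing_inv H hHdet, one_mulVec]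
      have hQ : φm y ⬝ᵥ (fromBlocks H Bᵀ B (-G) *ᵥ φm y)
          = -(z ⬝ᵥ (H⁻¹ *ᵥ z)) - y ⬝ᵥ (G *ᵥ y) := by
        show Sum.elim a y ⬝ᵥ (fromBlocks H Bᵀ B (-G) *ᵥ Sum.elim a y) = _
        rw [fromBlocks_mulVec, sumElim_dotProduct_sumElim]
        simp only [Sum.elim_comp_inl, Sum.elim_comp_inr]
        rw [hHa]
        have hBa : y ⬝ᵥ (B *ᵥ a) = z ⬝ᵥ a := by
          rw [dotProduct_mulVec, ← mulVec_transpose]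
        simp only [neg_add_cancel, dotProduct_zero, dotProduct_add, hBa, neg_mulVec,
          dotProduct_neg, ha, dotProduct_neg]
        simp only [neg_dotProduct, dotProduct_neg, neg_neg, mulVec_neg, ← hz]
        rw [dotProduct_mulVec y B, ← mulVec_transpose]
        simp only [← hz, dotProduct_comm (H⁻¹ *ᵥ z) z]
        ring
      rw [hQ]
      have h1 : 0 ≤ z ⬝ᵥ (H⁻¹ *ᵥ z) := by
        simpa using hHinv.posSemidef.dotProduct_mulVec_nonneg z
      have h2 : 0 < y ⬝ᵥ (G *ᵥ y) := by simpa using hG.dotProduct_mulVec_pos hy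
      linarith
  -- counting
  have htot : (Finset.univ.filter fun i => 0 < hK.eigenvalues i).card
      + ((Finset.univ.filter fun i => hK.eigenvalues i < 0).card
        + (Finset.univ.filter fun i => hK.eigenvalues i = 0).card) = n + m := by
    have d1 : Disjoint (Finset.univ.filter fun i => hK.eigenvalues i < 0)
        (Finset.univ.filter fun i => hK.eigenvalues i = 0) := by
      rw [Finset.disjoint_left]
      intro i h1 h2
      simp only [Finset.mem_filter] at h1 h2
      linarith [h1.2, h2.2.le, h2.2.ge]
    have d2 : Disjoint (Finset.univ.filter fun i => 0 < hK.eigenvalues i)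
        ((Finset.univ.filter fun i => hK.eigenvalues i < 0)
          ∪ (Finset.univ.filter fun i => hK.eigenvalues i = 0)) := by
      rw [Finset.disjoint_left]
      intro i h1 h2
      simp only [Finset.mem_union, Finset.mem_filter] at h1 h2
      rcases h2 with h2 | h2
      · linarith [h1.2, h2.2]
      · linarith [h1.2, h2.2.le, h2.2.ge]
    rw [← Finset.card_union_of_disjoint d1, ← Finset.card_union_of_disjoint d2]
    have hu : ((Finset.univ.filter fun i => 0 < hK.eigenvalues i)
        ∪ ((Finset.univ.filter fun i => hK.eigenvalues i < 0)
          ∪ (Finset.univ.filter fun i => hK.eigenvalues i = 0)))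
        = (Finset.univ : Finset (Fin n ⊕ Fin m)) := by
      ext i
      simp only [Finset.mem_union, Finset.mem_filter, Finset.mem_univ, true_and, iff_true]
      rcases lt_trichotomy (hK.eigenvalues i) 0 with h | h | h
      · exact Or.inr (Or.inl h)
      · exact Or.inr (Or.inr h)
      · exact Or.inl h
    rw [hu, Finset.card_univ]
    simp [Fintype.card_sum]
  omega
end

section
/- Let K be an (n+m)×(n+m) symmetric quasidefinite matrix, i.e., K = [[H, Bᵀ], [B, −G]] with H and G positive definite. Then for every permutation σ of the index set {1, …, n+m}, the symmetrically permuted matrix K' defined by K'ᵢⱼ = K_{σ(i)σ(j)} admits a factorization K' = L D Lᵀ, where L is a lower triangular matrix with unit diagonal and D is a diagonal matrix all of whose diagonal entries are nonzero. (In other words, SQD matrices are strongly factorizable: the LDLᵀ factorization exists for any symmetric permutation, so no numerical pivoting is needed for existence.) -/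
open Matrix

lemma sum_extend_mul {α β : Type*} [Fintype α] [Fintype β] [DecidableEq β]
    (g : α → β) (hg : Function.Injective g) (x : α → ℝ) (h : β → ℝ) :
    ∑ s, Function.extend g x 0 s * h s = ∑ i, x i * h (g i) := by
  have h1 : ∑ s, Function.extend g x 0 s * h s
      = ∑ s ∈ Finset.univ.image g, Function.extend g x 0 s * h s := by
    refine (Finset.sum_subset (Finset.subset_univ _) ?_).symm
    intro s _ hs
    rw [Function.extend_apply' _ _ _ (by simpa [eq_comm] using hs), Pi.zero_apply, zero_mul]
  rw [h1, Finset.sum_image (fun a _ b _ hab => hg hab)]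
  refine Finset.sum_congr rfl fun i _ => ?_
  rw [hg.extend_apply]

lemma sqd_submatrix_det_ne_zero {n m k : ℕ}
    (H : Matrix (Fin n) (Fin n) ℝ) (G : Matrix (Fin m) (Fin m) ℝ)
    (B : Matrix (Fin m) (Fin n) ℝ) (hH : H.PosDef) (hG : G.PosDef)
    (g : Fin k → Fin n ⊕ Fin m) (hg : Function.Injective g) :
    ((Matrix.fromBlocks H Bᵀ B (-G)).submatrix g g).det ≠ 0 := by
  set M := Matrix.fromBlocks H Bᵀ B (-G) with hM
  rw [← isUnit_iff_ne_zero, ← Matrix.isUnit_iff_isUnit_det,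
    ← Matrix.mulVec_injective_iff_isUnit]
  rw [show (M.submatrix g g).mulVec = (M.submatrix g g).mulVecLin from rfl,
    ← LinearMap.ker_eq_bot, LinearMap.ker_eq_bot']
  intro x hx
  replace hx : (M.submatrix g g) *ᵥ x = 0 := hx
  set y : Fin n ⊕ Fin m → ℝ := Function.extend g x 0 with hy
  set u : Fin n → ℝ := fun a => y (Sum.inl a) with hu
  set v : Fin m → ℝ := fun b => y (Sum.inr b) with hv
  have hyel : y = Sum.elim u v := by funext s; cases s <;> rfl
  -- M *ᵥ y vanishes on the range of g
  have hMy : ∀ i, (M *ᵥ y) (g i) = 0 := by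
    intro i
    have : (M *ᵥ y) (g i) = ((M.submatrix g g) *ᵥ x) i := by
      simp only [Matrix.mulVec, dotProduct, Matrix.submatrix_apply]
      rw [hy]
      have := sum_extend_mul g hg x (fun s => M (g i) s)
      simp only [mul_comm] at this ⊢
      exact this
    rw [this, hx, Pi.zero_apply]
  -- the key quadratic identity
  set w : Fin n ⊕ Fin m → ℝ := Sum.elim u (-v) with hw
  have hwdot : w ⬝ᵥ (M *ᵥ y) = 0 := by
    have hweq : w = Function.extend g (fun i => w (g i)) 0 := by
      funext s
      by_cases hs : ∃ i, g i = s
      · obtain ⟨i, rfl⟩ := hs; rw [hg.extend_apply]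
      · have hy0 : y s = 0 := by rw [hy, Function.extend_apply' _ _ _ hs, Pi.zero_apply]
        rw [Function.extend_apply' _ _ _ hs, Pi.zero_apply]
        have : u = y ∘ Sum.inl := rfl
        cases s with
        | inl a => simpa [hw, hu] using hy0
        | inr b => simp [hw, hv, hy0]
    rw [dotProduct, hweq]
    rw [sum_extend_mul g hg _ (fun s => (M *ᵥ y) s)]
    simp [hMy]
  have hquad : u ⬝ᵥ (H *ᵥ u) + v ⬝ᵥ (G *ᵥ v) = 0 := by
    rw [hyel] at hwdot
    rw [hM, Matrix.fromBlocks_mulVec] at hwdot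
    rw [hw, sumElim_dotProduct_sumElim] at hwdot
    have hBt : u ⬝ᵥ (Bᵀ *ᵥ v) = v ⬝ᵥ (B *ᵥ u) := by
      rw [Matrix.dotProduct_mulVec, Matrix.vecMul_transpose, dotProduct_comm]
    simp only [Sum.elim_comp_inl, Sum.elim_comp_inr, dotProduct_add,
      neg_dotProduct, Matrix.neg_mulVec, dotProduct_neg] at hwdot
    rw [hBt] at hwdot
    linarith [hwdot]
  have hu0 : u = 0 := by
    by_contra h0
    have h1 := hH.dotProduct_mulVec_pos h0
    have h2 := hG.posSemidef.dotProduct_mulVec_nonneg v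
    simp only [star_trivial] at h1 h2
    linarith
  have hv0 : v = 0 := by
    by_contra h0
    have h1 := hG.dotProduct_mulVec_pos h0
    have h2 := hH.posSemidef.dotProduct_mulVec_nonneg u
    simp only [star_trivial] at h1 h2
    linarith
  funext i
  have : x i = y (g i) := (hg.extend_apply x 0 i).symm
  rw [hyel] at this
  cases hgi : g i with
  | inl a => rw [hgi] at this; simp [this, congrFun hu0 a]
  | inr b => rw [hgi] at this; simp [this, congrFun hv0 b]


lemma triple_apply {ι : Type*} [Fintype ι] [DecidableEq ι]
    (L : Matrix ι ι ℝ) (d : ι → ℝ) (a c : ι) :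
    (L * Matrix.diagonal d * Lᵀ) a c = ∑ k, L a k * d k * L c k := by
  rw [Matrix.mul_apply]
  simp [Matrix.mul_diagonal, Matrix.transpose_apply]

lemma ldl_exists : ∀ (N : ℕ) (A : Matrix (Fin N) (Fin N) ℝ), Aᵀ = A →
    (∀ (k : ℕ) (h : k ≤ N), ((A.submatrix (Fin.castLE h) (Fin.castLE h)).det ≠ 0)) →
    ∃ (L : Matrix (Fin N) (Fin N) ℝ) (d : Fin N → ℝ),
      (∀ i j, i < j → L i j = 0) ∧ (∀ i, L i i = 1) ∧ (∀ i, d i ≠ 0) ∧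
      A = L * Matrix.diagonal d * Lᵀ := by
  intro N
  induction N with
  | zero =>
    intro A _ _
    exact ⟨1, fun i => i.elim0, fun i => i.elim0, fun i => i.elim0, fun i => i.elim0,
      Subsingleton.elim _ _⟩
  | succ N ih =>
    intro A hsym hmin
    set A' := A.submatrix (Fin.castSucc) (Fin.castSucc) with hA'
    have hsym' : A'ᵀ = A' := by
      rw [hA', Matrix.transpose_submatrix, hsym]
    have hmin' : ∀ (k : ℕ) (h : k ≤ N),
        ((A'.submatrix (Fin.castLE h) (Fin.castLE h)).det ≠ 0) := by
      intro k h
      have h2 : k ≤ N + 1 := h.trans (Nat.le_succ N)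
      have : A'.submatrix (Fin.castLE h) (Fin.castLE h)
          = A.submatrix (Fin.castLE h2) (Fin.castLE h2) := by
        rw [hA', Matrix.submatrix_submatrix]
        congr 1 <;> funext i <;> exact Fin.ext rfl
      rw [this]; exact hmin k h2
    obtain ⟨L', d', hL'low, hL'diag, hd', hfact'⟩ := ih A' hsym' hmin'
    -- the last column data
    set b : Fin N → ℝ := fun i => A i.castSucc (Fin.last N) with hb
    set M' := L' * Matrix.diagonal d' with hM'
    have hdetL' : L'.det = 1 := by
      have : L'.BlockTriangular OrderDual.toDual := fun i j hij => hL'low i j hij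
      rw [Matrix.det_of_lowerTriangular L' this]
      simp [hL'diag]
    have hdetM' : M'.det ≠ 0 := by
      rw [hM', Matrix.det_mul, hdetL', one_mul, Matrix.det_diagonal]
      exact Finset.prod_ne_zero_iff.mpr fun i _ => hd' i
    set ℓ : Fin N → ℝ := M'⁻¹ *ᵥ b with hℓ
    have hM'ℓ : M' *ᵥ ℓ = b := by
      rw [hℓ, Matrix.mulVec_mulVec, Matrix.mul_nonsing_inv _ (isUnit_iff_ne_zero.mpr hdetM'),
        Matrix.one_mulVec]
    set δ : ℝ := A (Fin.last N) (Fin.last N) - ∑ k, ℓ k * d' k * ℓ k with hδ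
    -- build L and d
    set L : Matrix (Fin (N + 1)) (Fin (N + 1)) ℝ :=
      Matrix.of (Fin.snoc (fun a => (Fin.snoc (L' a) (0 : ℝ) : Fin (N + 1) → ℝ))
        (Fin.snoc ℓ 1)) with hL
    set d : Fin (N + 1) → ℝ := Fin.snoc d' δ with hd
    have hLcc : ∀ a c : Fin N, L a.castSucc c.castSucc = L' a c := by
      intro a c; simp [hL, Fin.snoc_castSucc]
    have hLcl : ∀ a : Fin N, L a.castSucc (Fin.last N) = 0 := by
      intro a; simp [hL]
    have hLlc : ∀ c : Fin N, L (Fin.last N) c.castSucc = ℓ c := by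
      intro c; simp [hL]
    have hLll : L (Fin.last N) (Fin.last N) = 1 := by simp [hL]
    have hlow : ∀ i j : Fin (N + 1), i < j → L i j = 0 := by
      intro i j hij
      induction j using Fin.lastCases with
      | last =>
        induction i using Fin.lastCases with
        | last => exact absurd hij (lt_irrefl _)
        | cast a => exact hLcl a
      | cast c =>
        induction i using Fin.lastCases with
        | last => exact absurd (hij.trans_le (Fin.le_last _)) (lt_irrefl _)
        | cast a => rw [hLcc]; exact hL'low a c (by simpa using hij)
    have hdiag : ∀ i : Fin (N + 1), L i i = 1 := by
      intro i
      induction i using Fin.lastCases with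
      | last => exact hLll
      | cast a => rw [hLcc]; exact hL'diag a
    -- the factorization
    have key : ∀ i j, (L * Matrix.diagonal d * Lᵀ) i j
        = ∑ k : Fin N, L i k.castSucc * d' k * L j k.castSucc
          + L i (Fin.last N) * δ * L j (Fin.last N) := by
      intro i j
      rw [triple_apply, Fin.sum_univ_castSucc]
      simp [hd, Fin.snoc_castSucc, Fin.snoc_last]
    have hMV : ∀ a : Fin N, ∑ k, L' a k * d' k * ℓ k = A a.castSucc (Fin.last N) := by
      intro a
      have h1 : (M' *ᵥ ℓ) a = A a.castSucc (Fin.last N) := by rw [hM'ℓ, hb]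
      rw [← h1]
      simp [hM', Matrix.mulVec, dotProduct, Matrix.mul_diagonal]
    have hfact : A = L * Matrix.diagonal d * Lᵀ := by
      ext i j
      rw [key]
      induction i using Fin.lastCases with
      | last =>
        induction j using Fin.lastCases with
        | last =>
          simp only [hLll, hLlc, one_mul, mul_one]
          rw [hδ]; ring
        | cast c =>
          simp only [hLll, hLlc, hLcl, mul_zero, zero_mul, one_mul, mul_one, add_zero]
          have h2 : A (Fin.last N) c.castSucc = A c.castSucc (Fin.last N) := by
            have h := congrFun (congrFun hsym (Fin.last N)) c.castSucc
            exact h.symm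
          rw [h2, ← hMV c]
          exact Finset.sum_congr rfl fun k _ => by rw [hLcc]; ring
      | cast a =>
        induction j using Fin.lastCases with
        | last =>
          simp only [hLcl, hLlc, hLll, zero_mul, mul_zero, mul_one, add_zero]
          rw [← hMV a]
          exact Finset.sum_congr rfl fun k _ => by rw [hLcc]
        | cast c =>
          simp only [hLcl, zero_mul, mul_zero, add_zero]
          have : A a.castSucc c.castSucc = (L' * Matrix.diagonal d' * L'ᵀ) a c := by
            rw [← hfact']; rfl
          rw [this, triple_apply]
          exact Finset.sum_congr rfl fun k _ => by rw [hLcc, hLcc]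
    -- nonzero diagonal of d
    have hdetA : A.det ≠ 0 := by
      have := hmin (N + 1) (le_refl _)
      have hid : A.submatrix (Fin.castLE (le_refl (N+1))) (Fin.castLE (le_refl (N+1))) = A := by
        ext i j
        simp only [Matrix.submatrix_apply]
        congr 1 <;> exact Fin.ext rfl
      rwa [hid] at this
    have hdetL : L.det = 1 := by
      have : L.BlockTriangular OrderDual.toDual := fun i j hij => hlow i j hij
      rw [Matrix.det_of_lowerTriangular L this]
      simp [hdiag]
    have hdnz : ∀ i, d i ≠ 0 := by
      have : A.det = ∏ i, d i := by
        rw [hfact, Matrix.det_mul, Matrix.det_mul, hdetL, Matrix.det_transpose, hdetL,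
          Matrix.det_diagonal, one_mul, mul_one]
      rw [this] at hdetA
      intro i
      exact Finset.prod_ne_zero_iff.mp hdetA i (Finset.mem_univ i)
    exact ⟨L, d, hlow, hdiag, hdnz, hfact⟩


/-- SQD matrices are strongly factorizable: for every symmetric permutation, the permuted
matrix admits an LDLᵀ factorization with unit lower triangular `L` and diagonal `D`
having nonzero diagonal entries. -/
theorem sqd_strongly_factorizable (n m : ℕ)
    (H : Matrix (Fin n) (Fin n) ℝ) (G : Matrix (Fin m) (Fin m) ℝ)
    (B : Matrix (Fin m) (Fin n) ℝ)
    (hH : H.PosDef) (hG : G.PosDef)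
    (K : Matrix (Fin (n + m)) (Fin (n + m)) ℝ)
    (hK : K = (Matrix.fromBlocks H Bᵀ B (-G)).submatrix
        finSumFinEquiv.symm finSumFinEquiv.symm)
    (σ : Equiv.Perm (Fin (n + m))) :
    ∃ (L : Matrix (Fin (n + m)) (Fin (n + m)) ℝ) (d : Fin (n + m) → ℝ),
      (∀ i j, i < j → L i j = 0) ∧ (∀ i, L i i = 1) ∧ (∀ i, d i ≠ 0) ∧
      K.submatrix σ σ = L * Matrix.diagonal d * Lᵀ := by
  have hHt : Hᵀ = H := by
    rw [← Matrix.conjTranspose_eq_transpose_of_trivial]; exact hH.1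
  have hGt : Gᵀ = G := by
    rw [← Matrix.conjTranspose_eq_transpose_of_trivial]; exact hG.1
  have hsym : (K.submatrix σ σ)ᵀ = K.submatrix σ σ := by
    rw [Matrix.transpose_submatrix, hK, Matrix.transpose_submatrix,
      Matrix.fromBlocks_transpose, Matrix.transpose_transpose, Matrix.transpose_neg, hHt, hGt]
  have hmin : ∀ (k : ℕ) (h : k ≤ n + m),
      (((K.submatrix σ σ).submatrix (Fin.castLE h) (Fin.castLE h)).det ≠ 0) := by
    intro k h
    rw [hK, Matrix.submatrix_submatrix, Matrix.submatrix_submatrix]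
    exact sqd_submatrix_det_ne_zero H G B hH hG _
      (finSumFinEquiv.symm.injective.comp (σ.injective.comp (Fin.castLE_injective h)))
  obtain ⟨L, d, h1, h2, h3, h4⟩ := ldl_exists (n + m) (K.submatrix σ σ) hsym hmin
  exact ⟨L, d, h1, h2, h3, h4⟩
end

section
/- Let K be an (n+m)×(n+m) symmetric quasidefinite matrix, i.e., K = [[H, Bᵀ], [B, −G]] with H n×n positive definite and G m×m positive definite, and suppose K = L D Lᵀ where L is lower triangular with unit diagonal and D is diagonal. Then exactly n of the diagonal entries of D are positive and exactly m are negative (and none are zero). -/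
open Matrix

lemma aux_card {N : ℕ} (L : Matrix (Fin N) (Fin N) ℝ) (d : Fin N → ℝ) {k : ℕ}
    (em : (Fin k → ℝ) →ₗ[ℝ] (Fin N → ℝ))
    (hpos : ∀ x : Fin k → ℝ, x ≠ 0 → 0 < ∑ i, d i * (Lᵀ *ᵥ em x) i ^ 2) :
    k ≤ (Finset.univ.filter fun i => 0 < d i).card := by
  set P := Finset.univ.filter fun i => 0 < d i with hP
  let φ : (Fin k → ℝ) →ₗ[ℝ] (↥P → ℝ) :=
  { toFun := fun x i => (Lᵀ *ᵥ em x) i.1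
    map_add' := by intro x y; funext i; simp [Matrix.mulVec_add]
    map_smul' := by intro c x; funext i; simp [Matrix.mulVec_smul] }
  have hinj : Function.Injective φ := by
    rw [injective_iff_map_eq_zero]
    intro x hx
    by_contra hne
    have h0 := hpos x hne
    have hle : ∑ i, d i * (Lᵀ *ᵥ em x) i ^ 2 ≤ 0 := by
      apply Finset.sum_nonpos
      intro i _
      by_cases hi : 0 < d i
      · have hmem : i ∈ P := by simp [hP, hi]
        have := congrFun hx (⟨i, hmem⟩ : ↥P)
        have h2 : (Lᵀ *ᵥ em x) i = 0 := this
        simp [h2]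
      · have : d i ≤ 0 := le_of_not_gt hi
        exact mul_nonpos_of_nonpos_of_nonneg this (sq_nonneg _)
    linarith
  have hfin := LinearMap.finrank_le_finrank_of_injective hinj
  simpa [Module.finrank_fintype_fun_eq_card, Fintype.card_coe] using hfin

def embL (n m : ℕ) : (Fin n → ℝ) →ₗ[ℝ] (Fin (n + m) → ℝ) :=
{ toFun := fun x => Sum.elim x 0 ∘ finSumFinEquiv.symm
  map_add' := by
    intro x y; funext j
    rcases h : finSumFinEquiv.symm j with a | a <;> simp [h]
  map_smul' := by
    intro c x; funext j
    rcases h : finSumFinEquiv.symm j with a | a <;> simp [h] }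

def embR (n m : ℕ) : (Fin m → ℝ) →ₗ[ℝ] (Fin (n + m) → ℝ) :=
{ toFun := fun y => Sum.elim 0 y ∘ finSumFinEquiv.symm
  map_add' := by
    intro x y; funext j
    rcases h : finSumFinEquiv.symm j with a | a <;> simp [h]
  map_smul' := by
    intro c x; funext j
    rcases h : finSumFinEquiv.symm j with a | a <;> simp [h] }


/-- If an SQD matrix `K = [[H, Bᵀ], [B, −G]]` (with `H` of size `n` and `G` of size `m`
positive definite) has an LDLᵀ factorization `K = L D Lᵀ` with `L` unit lower triangular
and `D` diagonal, then exactly `n` diagonal entries of `D` are positive, exactly `m`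
are negative, and none are zero. -/
theorem sqd_ldlt_diagonal_signs (n m : ℕ)
    (H : Matrix (Fin n) (Fin n) ℝ) (G : Matrix (Fin m) (Fin m) ℝ)
    (B : Matrix (Fin m) (Fin n) ℝ)
    (hH : H.PosDef) (hG : G.PosDef)
    (K : Matrix (Fin (n + m)) (Fin (n + m)) ℝ)
    (hK : K = (Matrix.fromBlocks H Bᵀ B (-G)).submatrix
        finSumFinEquiv.symm finSumFinEquiv.symm)
    (L : Matrix (Fin (n + m)) (Fin (n + m)) ℝ) (d : Fin (n + m) → ℝ)
    (hLlower : ∀ i j, i < j → L i j = 0) (hLdiag : ∀ i, L i i = 1)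
    (hfact : K = L * Matrix.diagonal d * Lᵀ) :
    (Finset.univ.filter fun i => 0 < d i).card = n ∧
    (Finset.univ.filter fun i => d i < 0).card = m ∧
    (Finset.univ.filter fun i => d i = 0).card = 0 := by
  -- quadratic form identity
  have hq : ∀ z : Fin (n + m) → ℝ,
      z ⬝ᵥ (K *ᵥ z) = ∑ i, d i * (Lᵀ *ᵥ z) i ^ 2 := by
    intro z
    rw [hfact, ← Matrix.mulVec_mulVec, ← Matrix.mulVec_mulVec,
      Matrix.dotProduct_mulVec, ← Matrix.mulVec_transpose]
    simp only [dotProduct, Matrix.mulVec_diagonal]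
    exact Finset.sum_congr rfl fun i _ => by ring
  -- the quadratic form on block vectors
  have hqK : ∀ (x : Fin n → ℝ) (y : Fin m → ℝ),
      (Sum.elim x y ∘ finSumFinEquiv.symm) ⬝ᵥ (K *ᵥ (Sum.elim x y ∘ finSumFinEquiv.symm))
        = x ⬝ᵥ (H *ᵥ x) + y ⬝ᵥ (B *ᵥ x) + x ⬝ᵥ (Bᵀ *ᵥ y) - y ⬝ᵥ (G *ᵥ y) := by
    intro x y
    rw [hK, Matrix.submatrix_mulVec_equiv]
    have h1 : (Sum.elim x y ∘ finSumFinEquiv.symm) ∘ (finSumFinEquiv.symm).symm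
        = Sum.elim x y := by
      funext j; simp
    rw [h1, Matrix.fromBlocks_mulVec]
    simp only [Sum.elim_comp_inl, Sum.elim_comp_inr]
    rw [comp_equiv_dotProduct_comp_equiv]
    simp only [sumElim_dotProduct_sumElim, dotProduct_add,
      Matrix.neg_mulVec, dotProduct_neg, dotProduct_sub]
    ring
  -- positive count ≥ n
  -- positive count
  have hposP : ∀ x : Fin n → ℝ, x ≠ 0 →
      0 < ∑ i, d i * (Lᵀ *ᵥ (embL n m) x) i ^ 2 := by
    intro x hx
    have h1 : ((embL n m) x) ⬝ᵥ (K *ᵥ ((embL n m) x)) = x ⬝ᵥ (H *ᵥ x) := by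
      have := hqK x 0
      simpa [embL, Matrix.mulVec_zero, dotProduct_zero,
        zero_dotProduct] using this
    have h2 : 0 < x ⬝ᵥ (H *ᵥ x) := by
      simpa [star_trivial] using hH.dotProduct_mulVec_pos hx
    rw [← hq, h1]; exact h2
  have hcardP : n ≤ (Finset.univ.filter fun i => 0 < d i).card :=
    aux_card L d (embL n m) hposP
  -- negative count
  have hposN : ∀ y : Fin m → ℝ, y ≠ 0 →
      0 < ∑ i, (-d) i * (Lᵀ *ᵥ (embR n m) y) i ^ 2 := by
    intro y hy
    have h1 : ((embR n m) y) ⬝ᵥ (K *ᵥ ((embR n m) y)) = -(y ⬝ᵥ (G *ᵥ y)) := by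
      have := hqK 0 y
      simpa [embR, Matrix.mulVec_zero, dotProduct_zero,
        zero_dotProduct] using this
    have h2 : 0 < y ⬝ᵥ (G *ᵥ y) := by
      simpa [star_trivial] using hG.dotProduct_mulVec_pos hy
    have h3 : ∑ i, (-d) i * (Lᵀ *ᵥ (embR n m) y) i ^ 2
        = -(((embR n m) y) ⬝ᵥ (K *ᵥ ((embR n m) y))) := by
      rw [hq, ← Finset.sum_neg_distrib]
      exact Finset.sum_congr rfl fun i _ => by ring_nf; simp [mul_comm]
    rw [h3, h1, neg_neg]; exact h2
  have hcardN' : m ≤ (Finset.univ.filter fun i => 0 < (-d) i).card :=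
    aux_card L (-d) (embR n m) hposN
  have hfc : (Finset.univ.filter fun i => 0 < (-d) i)
      = (Finset.univ.filter fun i => d i < 0) := by
    apply Finset.filter_congr
    intro i _
    simp [neg_pos]
  rw [hfc] at hcardN'
  -- combine
  set P := Finset.univ.filter fun i => 0 < d i with hPdef
  set Nn := Finset.univ.filter fun i => d i < 0 with hNdef
  have hdisj : Disjoint P Nn := by
    rw [Finset.disjoint_left]
    intro i hiP hiN
    rw [hPdef, Finset.mem_filter] at hiP
    rw [hNdef, Finset.mem_filter] at hiN
    linarith [hiP.2, hiN.2]
  have hsum : P.card + Nn.card ≤ n + m := by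
    rw [← Finset.card_union_of_disjoint hdisj]
    calc (P ∪ Nn).card ≤ Finset.univ.card := Finset.card_le_univ _
      _ = n + m := by simp
  have hPn : P.card = n := by omega
  have hNm : Nn.card = m := by omega
  refine ⟨hPn, hNm, ?_⟩
  have huniv : P ∪ Nn = Finset.univ := by
    apply Finset.eq_univ_of_card
    rw [Finset.card_union_of_disjoint hdisj, hPn, hNm]
    simp
  rw [Finset.card_eq_zero, Finset.filter_eq_empty_iff]
  intro i _
  have : i ∈ P ∪ Nn := huniv ▸ Finset.mem_univ i
  rcases Finset.mem_union.mp this with h | h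
  · rw [hPdef, Finset.mem_filter] at h; exact ne_of_gt h.2
  · rw [hNdef, Finset.mem_filter] at h; exact ne_of_lt h.2
end

section
/- Let W be an n×n real symmetric matrix, J an m×n real matrix, D an m×m diagonal matrix with strictly positive diagonal entries, and δₚ ≥ 0. Consider the augmented KKT matrix K = [[W + δₚI, Jᵀ], [J, −D]]. Then K has inertia (n, m, 0) (exactly n positive eigenvalues, m negative eigenvalues, and no zero eigenvalues) if and only if the primal condensed matrix W + δₚI + Jᵀ D⁻¹ J is positive definite. -/
open Matrix
open Module Submodule Set

section helpers
variable {ι κ : Type*} [Fintype ι] [DecidableEq ι]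

lemma ic_dot_sum (v : ι → ℝ) (s : Finset κ) (f : κ → ι → ℝ) :
    v ⬝ᵥ (∑ k ∈ s, f k) = ∑ k ∈ s, v ⬝ᵥ (f k) := by
  simp only [dotProduct, Finset.sum_apply, Finset.mul_sum]
  exact Finset.sum_comm

lemma ic_sum_dot (v : ι → ℝ) (s : Finset κ) (f : κ → ι → ℝ) :
    (∑ k ∈ s, f k) ⬝ᵥ v = ∑ k ∈ s, (f k) ⬝ᵥ v := by
  simp only [dotProduct, Finset.sum_apply, Finset.sum_mul]
  exact Finset.sum_comm

lemma ic_mulVec_sum (A : Matrix ι ι ℝ) (s : Finset κ) (f : κ → ι → ℝ) :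
    A *ᵥ (∑ k ∈ s, f k) = ∑ k ∈ s, A *ᵥ f k := by
  funext i
  simp only [Matrix.mulVec, ic_dot_sum, Finset.sum_apply]

lemma ic_disjoint_le (A : Matrix ι ι ℝ) (V W : Submodule ℝ (ι → ℝ))
    (hV : ∀ v ∈ V, v ≠ 0 → 0 < v ⬝ᵥ (A *ᵥ v)) (hW : ∀ w ∈ W, w ⬝ᵥ (A *ᵥ w) ≤ 0) :
    finrank ℝ V + finrank ℝ W ≤ Fintype.card ι := by
  have hdis : V ⊓ W = ⊥ := by
    rw [Submodule.eq_bot_iff]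
    rintro v ⟨hv1, hv2⟩
    by_contra h
    exact absurd (hW v hv2) (not_le.2 (hV v hv1 h))
  have := Submodule.finrank_sup_add_finrank_inf_eq V W
  rw [hdis, finrank_bot, add_zero] at this
  rw [← this]
  calc finrank ℝ ↥(V ⊔ W) ≤ finrank ℝ (ι → ℝ) := Submodule.finrank_le _
    _ = Fintype.card ι := Module.finrank_fintype_fun_eq_card ℝ

end helpers

section eig
variable {ι : Type*} [Fintype ι] [DecidableEq ι]
variable {A : Matrix ι ι ℝ} (hA : A.IsHermitian)

lemma ic_eig_dot (j k : ι) :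
    ⇑(hA.eigenvectorBasis j) ⬝ᵥ ⇑(hA.eigenvectorBasis k) = if j = k then 1 else 0 := by
  have h := orthonormal_iff_ite.mp hA.eigenvectorBasis.orthonormal j k
  rw [dotProduct_comm]
  simpa [PiLp.inner_apply, dotProduct, RCLike.inner_apply, conj_trivial] using h

lemma ic_eig_li (P : Finset ι) :
    LinearIndependent ℝ (fun j : P => (⇑(hA.eigenvectorBasis j) : ι → ℝ)) := by
  rw [Fintype.linearIndependent_iff]
  intro c hc k
  have h2 := congrArg (fun v => v ⬝ᵥ (⇑(hA.eigenvectorBasis (k : ι)) : ι → ℝ)) hc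
  simp only [ic_sum_dot, smul_dotProduct, ic_eig_dot hA, smul_eq_mul] at h2
  simp only [zero_dotProduct, mul_ite, mul_one, mul_zero] at h2
  simpa [Subtype.coe_inj, Finset.sum_ite_eq'] using h2

lemma ic_eig_span_form (P : Finset ι) (v : ι → ℝ)
    (hv : v ∈ Submodule.span ℝ (Set.range (fun j : P => (⇑(hA.eigenvectorBasis j) : ι → ℝ)))) :
    ∃ c : P → ℝ, v = ∑ j, c j • (⇑(hA.eigenvectorBasis (j : ι)) : ι → ℝ) ∧
      v ⬝ᵥ (A *ᵥ v) = ∑ j : P, hA.eigenvalues (j : ι) * c j ^ 2 := by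
  obtain ⟨c, hc⟩ := (mem_span_range_iff_exists_fun ℝ).1 hv
  refine ⟨c, hc.symm, ?_⟩
  rw [← hc]
  have hAv : A *ᵥ (∑ j : P, c j • (⇑(hA.eigenvectorBasis (j : ι)) : ι → ℝ))
      = ∑ j : P, (c j * hA.eigenvalues (j : ι)) • (⇑(hA.eigenvectorBasis (j : ι)) : ι → ℝ) := by
    rw [ic_mulVec_sum]
    refine Finset.sum_congr rfl fun j _ => ?_
    rw [Matrix.mulVec_smul, hA.mulVec_eigenvectorBasis, smul_smul, mul_comm]
  rw [hAv, ic_dot_sum]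
  rw [Finset.sum_congr rfl (fun k _ => ic_sum_dot _ _ _)]
  simp only [smul_dotProduct, dotProduct_smul, ic_eig_dot hA, smul_eq_mul,
    Subtype.coe_inj, mul_ite, mul_one, mul_zero]
  rw [Finset.sum_comm]
  simp only [Finset.sum_ite_eq, Finset.mem_univ, if_true]
  refine Finset.sum_congr rfl fun j _ => by ring

lemma ic_eig_span_posQ (P : Finset ι) (hP : ∀ j ∈ P, 0 < hA.eigenvalues j) :
    ∀ v ∈ Submodule.span ℝ (Set.range (fun j : P => (⇑(hA.eigenvectorBasis j) : ι → ℝ))),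
      v ≠ 0 → 0 < v ⬝ᵥ (A *ᵥ v) := by
  intro v hv hv0
  obtain ⟨c, hvc, hQ⟩ := ic_eig_span_form hA P v hv
  have hc : c ≠ 0 := by
    rintro rfl
    simp at hvc
    exact hv0 hvc
  obtain ⟨j, hj⟩ := Function.ne_iff.1 hc
  rw [hQ]
  refine Finset.sum_pos' (fun k _ => mul_nonneg (le_of_lt (hP _ k.2)) (sq_nonneg _)) ⟨j, Finset.mem_univ j, ?_⟩
  exact mul_pos (hP _ j.2) (lt_of_le_of_ne (sq_nonneg _) (Ne.symm (pow_ne_zero 2 hj)))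

/-- number of positive eigenvalues bounds dimension of any positive subspace -/
lemma ic_pos_count_ge (V : Submodule ℝ (ι → ℝ))
    (hV : ∀ v ∈ V, v ≠ 0 → 0 < v ⬝ᵥ (A *ᵥ v)) :
    finrank ℝ V ≤ (Finset.univ.filter fun i => 0 < hA.eigenvalues i).card := by
  classical
  set P : Finset ι := Finset.univ.filter fun i => ¬ 0 < hA.eigenvalues i with hP
  set Wsp := Submodule.span ℝ (Set.range (fun j : P => (⇑(hA.eigenvectorBasis j) : ι → ℝ)))
  have hWle : ∀ w ∈ Wsp, w ⬝ᵥ (A *ᵥ w) ≤ 0 := by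
    intro w hw
    obtain ⟨c, -, hQ⟩ := ic_eig_span_form hA P w hw
    rw [hQ]
    refine Finset.sum_nonpos fun j _ => ?_
    have hj : ¬ 0 < hA.eigenvalues (j : ι) := (Finset.mem_filter.1 j.2).2
    exact mul_nonpos_of_nonpos_of_nonneg (le_of_not_gt hj) (sq_nonneg _)
  have hWrank : finrank ℝ Wsp = P.card := by
    rw [finrank_span_eq_card (ic_eig_li hA P), Fintype.card_coe]
  have h := ic_disjoint_le A V Wsp hV hWle
  rw [hWrank, hP] at h
  have hpart := Finset.card_filter_add_card_filter_not
    (s := (Finset.univ : Finset ι)) (p := fun i => 0 < hA.eigenvalues i)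
  simp only [Finset.card_univ] at hpart
  omega

/-- number of negative eigenvalues bounds dimension of any negative subspace -/
lemma ic_neg_count_ge (V : Submodule ℝ (ι → ℝ))
    (hV : ∀ v ∈ V, v ≠ 0 → v ⬝ᵥ (A *ᵥ v) < 0) :
    finrank ℝ V ≤ (Finset.univ.filter fun i => hA.eigenvalues i < 0).card := by
  classical
  set P : Finset ι := Finset.univ.filter fun i => ¬ hA.eigenvalues i < 0 with hP
  set Wsp := Submodule.span ℝ (Set.range (fun j : P => (⇑(hA.eigenvectorBasis j) : ι → ℝ)))
  have hWle : ∀ w ∈ Wsp, w ⬝ᵥ ((-A) *ᵥ w) ≤ 0 := by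
    intro w hw
    obtain ⟨c, -, hQ⟩ := ic_eig_span_form hA P w hw
    rw [Matrix.neg_mulVec, dotProduct_neg, hQ, neg_nonpos]
    refine Finset.sum_nonneg fun j _ => ?_
    have hj : ¬ hA.eigenvalues (j : ι) < 0 := (Finset.mem_filter.1 j.2).2
    exact mul_nonneg (le_of_not_gt hj) (sq_nonneg _)
  have hVpos : ∀ v ∈ V, v ≠ 0 → 0 < v ⬝ᵥ ((-A) *ᵥ v) := by
    intro v hv hv0
    rw [Matrix.neg_mulVec, dotProduct_neg]
    exact neg_pos.2 (hV v hv hv0)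
  have hWrank : finrank ℝ Wsp = P.card := by
    rw [finrank_span_eq_card (ic_eig_li hA P), Fintype.card_coe]
  have h := ic_disjoint_le (-A) V Wsp hVpos hWle
  rw [hWrank, hP] at h
  have hpart := Finset.card_filter_add_card_filter_not
    (s := (Finset.univ : Finset ι)) (p := fun i => hA.eigenvalues i < 0)
  simp only [Finset.card_univ] at hpart
  omega

end eig

section concrete
variable {ι : Type*} [Fintype ι] [DecidableEq ι]

lemma ic_key (L Li : Matrix ι ι ℝ) (hLLi : L * Li = 1) {κ : Type*} [Fintype κ]
    (u : κ → ι → ℝ) (v : ι → ℝ)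
    (hv : v ∈ Submodule.span ℝ (Set.range fun i => Li *ᵥ u i)) :
    ∃ c : κ → ℝ, v = ∑ i, c i • (Li *ᵥ u i) ∧ L *ᵥ v = ∑ i, c i • u i := by
  obtain ⟨c, hc⟩ := (mem_span_range_iff_exists_fun ℝ).1 hv
  refine ⟨c, hc.symm, ?_⟩
  rw [← hc, ic_mulVec_sum]
  refine Finset.sum_congr rfl fun i _ => ?_
  rw [Matrix.mulVec_smul, Matrix.mulVec_mulVec, hLLi, Matrix.one_mulVec]

lemma ic_li_map (L Li : Matrix ι ι ℝ) (hLLi : L * Li = 1) {κ : Type*} [Fintype κ]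
    (u : κ → ι → ℝ) (hu : ∀ c : κ → ℝ, ∑ i, c i • u i = 0 → ∀ i, c i = 0) :
    LinearIndependent ℝ (fun i => Li *ᵥ u i) := by
  rw [Fintype.linearIndependent_iff]
  intro c hc
  apply hu
  have := congrArg (fun w => L *ᵥ w) hc
  simp only [Matrix.mulVec_zero] at this
  rw [← this, ic_mulVec_sum]
  refine Finset.sum_congr rfl fun i _ => ?_
  rw [Matrix.mulVec_smul, Matrix.mulVec_mulVec, hLLi, Matrix.one_mulVec]

end concrete

section sums
variable {n m : ℕ}

lemma ic_sum_single_inl (c : Fin n → ℝ) :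
    ∑ i, c i • (Pi.single (Sum.inl i) 1 : Fin n ⊕ Fin m → ℝ) = Sum.elim c (0 : Fin m → ℝ) := by
  funext k
  rw [Finset.sum_apply]
  cases k with
  | inl k => simp [Pi.single_apply, Finset.sum_ite_eq']
  | inr k => simp [Pi.single_apply]

lemma ic_sum_single_inr (c : Fin m → ℝ) :
    ∑ i, c i • (Pi.single (Sum.inr i) 1 : Fin n ⊕ Fin m → ℝ) = Sum.elim (0 : Fin n → ℝ) c := by
  funext k
  rw [Finset.sum_apply]
  cases k with
  | inl k => simp [Pi.single_apply]
  | inr k => simp [Pi.single_apply, Finset.sum_ite_eq']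

lemma ic_elim_eq_zero {α : Fin n → ℝ} {β : Fin m → ℝ}
    (h : Sum.elim α β = 0) : α = 0 ∧ β = 0 := by
  constructor
  · funext i; exact congrFun h (Sum.inl i)
  · funext j; exact congrFun h (Sum.inr j)

end sums


/-- The augmented KKT matrix `K = [[W + δₚI, Jᵀ], [J, −D]]` has inertia `(n, m, 0)`
if and only if the primal condensed matrix `W + δₚI + Jᵀ D⁻¹ J` is positive definite. -/
theorem augmented_inertia_iff_condensed_posdef (n m : ℕ)
    (W : Matrix (Fin n) (Fin n) ℝ) (hW : W.IsHermitian)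
    (J : Matrix (Fin m) (Fin n) ℝ)
    (dvec : Fin m → ℝ) (hd : ∀ i, 0 < dvec i)
    (D : Matrix (Fin m) (Fin m) ℝ) (hD : D = Matrix.diagonal dvec)
    (δp : ℝ) (hδp : 0 ≤ δp)
    (hK : (Matrix.fromBlocks (W + δp • (1 : Matrix (Fin n) (Fin n) ℝ)) Jᵀ J
        (-D)).IsHermitian) :
    ((Finset.univ.filter fun i => 0 < hK.eigenvalues i).card = n ∧
     (Finset.univ.filter fun i => hK.eigenvalues i < 0).card = m ∧
     (Finset.univ.filter fun i => hK.eigenvalues i = 0).card = 0) ↔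
    (W + δp • (1 : Matrix (Fin n) (Fin n) ℝ) + Jᵀ * D⁻¹ * J).PosDef := by
  classical
  have hdet : ∀ i, dvec i ≠ 0 := fun i => ne_of_gt (hd i)
  set A := W + δp • (1 : Matrix (Fin n) (Fin n) ℝ) with hAdef
  set S := A + Jᵀ * D⁻¹ * J with hSdef
  set K := Matrix.fromBlocks A Jᵀ J (-D) with hKdef
  have hdiag1 : Matrix.diagonal dvec * Matrix.diagonal (fun i => (dvec i)⁻¹) = 1 := by
    rw [Matrix.diagonal_mul_diagonal,
      show (fun i => dvec i * (dvec i)⁻¹) = fun _ => (1:ℝ) from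
        funext fun i => mul_inv_cancel₀ (hdet i), Matrix.diagonal_one]
  have hDinv : D⁻¹ = Matrix.diagonal (fun i => (dvec i)⁻¹) := by
    apply Matrix.inv_eq_right_inv
    rw [hD]; exact hdiag1
  have hDD : D * D⁻¹ = 1 := by rw [hDinv, hD]; exact hdiag1
  have hDDi : D⁻¹ * D = 1 := by
    rw [hDinv, hD, Matrix.diagonal_mul_diagonal,
      show (fun i => (dvec i)⁻¹ * dvec i) = fun _ => (1:ℝ) from
        funext fun i => inv_mul_cancel₀ (hdet i), Matrix.diagonal_one]
  have hDt : (D⁻¹)ᵀ = D⁻¹ := by rw [hDinv, Matrix.diagonal_transpose]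
  set L := Matrix.fromBlocks (1 : Matrix (Fin n) (Fin n) ℝ) (0 : Matrix (Fin n) (Fin m) ℝ) (-(D⁻¹ * J)) (1 : Matrix (Fin m) (Fin m) ℝ) with hLdef
  set Li := Matrix.fromBlocks (1 : Matrix (Fin n) (Fin n) ℝ) (0 : Matrix (Fin n) (Fin m) ℝ) (D⁻¹ * J) (1 : Matrix (Fin m) (Fin m) ℝ) with hLidef
  have hLLi : L * Li = 1 := by
    rw [hLdef, hLidef, Matrix.fromBlocks_multiply, ← Matrix.fromBlocks_one]
    congr 1 <;> simp
  set B := Matrix.fromBlocks S 0 0 (-D) with hBdef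
  have hLt : Lᵀ = Matrix.fromBlocks 1 (-(Jᵀ * D⁻¹)) 0 1 := by
    rw [hLdef, Matrix.fromBlocks_transpose]
    simp [Matrix.transpose_mul, hDt]
  have h1 : Lᵀ * B = Matrix.fromBlocks S Jᵀ 0 (-D) := by
    rw [hLt, hBdef, Matrix.fromBlocks_multiply]
    congr 1 <;> simp [Matrix.mul_assoc, hDDi]
  have hKfact : Lᵀ * B * L = K := by
    rw [h1, hLdef, hKdef, Matrix.fromBlocks_multiply]
    have e11 : S * (1 : Matrix (Fin n) (Fin n) ℝ) + Jᵀ * -(D⁻¹ * J) = A := by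
      rw [Matrix.mul_one, Matrix.mul_neg, ← Matrix.mul_assoc, hSdef]
      abel
    have e12 : S * (0 : Matrix (Fin n) (Fin m) ℝ) + Jᵀ * (1 : Matrix (Fin m) (Fin m) ℝ) = Jᵀ := by simp
    have e21 : (0 : Matrix (Fin m) (Fin n) ℝ) * (1 : Matrix (Fin n) (Fin n) ℝ) + -D * -(D⁻¹ * J) = J := by
      simp [← Matrix.mul_assoc, hDD]
    have e22 : (0 : Matrix (Fin m) (Fin n) ℝ) * (0 : Matrix (Fin n) (Fin m) ℝ) + -D * (1 : Matrix (Fin m) (Fin m) ℝ) = -D := by simp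
    rw [e11, e12, e21, e22]
  -- quadratic form transfer
  have hQ : ∀ v : (Fin n ⊕ Fin m) → ℝ, v ⬝ᵥ (K *ᵥ v) = (L *ᵥ v) ⬝ᵥ (B *ᵥ (L *ᵥ v)) := by
    intro v
    rw [← hKfact, ← Matrix.mulVec_mulVec, ← Matrix.mulVec_mulVec,
      Matrix.dotProduct_mulVec, Matrix.vecMul_transpose]
  have hBform : ∀ (a : Fin n → ℝ) (b : Fin m → ℝ),
      (Sum.elim a b) ⬝ᵥ (B *ᵥ (Sum.elim a b)) = a ⬝ᵥ (S *ᵥ a) - b ⬝ᵥ (D *ᵥ b) := by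
    intro a b
    rw [hBdef, Matrix.fromBlocks_mulVec, sumElim_dotProduct_sumElim]
    simp [Matrix.neg_mulVec, sub_eq_add_neg]
  have hDq : ∀ b : Fin m → ℝ, b ⬝ᵥ (D *ᵥ b) = ∑ j, dvec j * b j ^ 2 := by
    intro b
    rw [hD]
    simp only [dotProduct, Matrix.mulVec_diagonal]
    exact Finset.sum_congr rfl fun j _ => by ring
  have hDq0 : ∀ b : Fin m → ℝ, 0 ≤ b ⬝ᵥ (D *ᵥ b) := by
    intro b
    rw [hDq]
    exact Finset.sum_nonneg fun j _ => mul_nonneg (hd j).le (sq_nonneg _)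
  have hDqpos : ∀ b : Fin m → ℝ, b ≠ 0 → 0 < b ⬝ᵥ (D *ᵥ b) := by
    intro b hb
    obtain ⟨j, hj⟩ := Function.ne_iff.1 hb
    rw [hDq]
    refine Finset.sum_pos' (fun k _ => mul_nonneg (hd k).le (sq_nonneg _))
      ⟨j, Finset.mem_univ j, mul_pos (hd j)
        (lt_of_le_of_ne (sq_nonneg _) (Ne.symm (pow_ne_zero 2 hj)))⟩
  have hcard : Fintype.card (Fin n ⊕ Fin m) = n + m := by simp
  -- the u1 family
  set u1 : Fin n → (Fin n ⊕ Fin m) → ℝ :=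
    fun i => (Pi.single (Sum.inl i) 1 : Fin n ⊕ Fin m → ℝ) with hu1def
  have hu1li : ∀ c : Fin n → ℝ, ∑ i, c i • u1 i = 0 → ∀ i, c i = 0 := by
    intro c h i
    rw [hu1def, ic_sum_single_inl] at h
    exact congrFun (ic_elim_eq_zero h).1 i
  -- S is hermitian
  have hJDJ : (Jᵀ * D⁻¹ * J).IsHermitian := by
    have : (Jᵀ * D⁻¹ * J)ᴴ = Jᵀ * D⁻¹ * J := by
      rw [show (Jᵀ * D⁻¹ * J)ᴴ = (Jᵀ * D⁻¹ * J)ᵀ from rfl, Matrix.transpose_mul,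
        Matrix.transpose_mul, Matrix.transpose_transpose, hDt, Matrix.mul_assoc]
    exact this
  have hAherm : A.IsHermitian := by
    have h2 : (δp • (1 : Matrix (Fin n) (Fin n) ℝ)).IsHermitian := by
      have : (δp • (1 : Matrix (Fin n) (Fin n) ℝ))ᴴ = δp • 1 := by
        rw [show (δp • (1 : Matrix (Fin n) (Fin n) ℝ))ᴴ = (δp • (1 : Matrix (Fin n) (Fin n) ℝ))ᵀ
          from rfl, Matrix.transpose_smul, Matrix.transpose_one]
      exact this
    exact hW.add h2
  have hSherm : S.IsHermitian := hAherm.add hJDJ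
  constructor
  · -- inertia → posdef
    rintro ⟨hp, -, -⟩
    refine Matrix.PosDef.of_dotProduct_mulVec_pos hSherm ?_
    intro x hx
    rw [show star x = x from star_trivial x]
    by_contra hle
    have hxS : x ⬝ᵥ (S *ᵥ x) ≤ 0 := not_lt.1 hle
    -- the (m+1)-dimensional nonpositive subspace
    set u2 : (Unit ⊕ Fin m) → (Fin n ⊕ Fin m) → ℝ :=
      Sum.elim (fun _ => Sum.elim x 0) (fun j => (Pi.single (Sum.inr j) 1 : Fin n ⊕ Fin m → ℝ))
      with hu2def
    have hu2sum : ∀ c : (Unit ⊕ Fin m) → ℝ,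
        ∑ k, c k • u2 k = Sum.elim (c (Sum.inl ()) • x) (fun j => c (Sum.inr j)) := by
      intro c
      rw [Fintype.sum_sum_type]
      have h2 : ∑ j, c (Sum.inr j) • u2 (Sum.inr j)
          = Sum.elim (0 : Fin n → ℝ) (fun j => c (Sum.inr j)) := by
        rw [hu2def]
        exact ic_sum_single_inr _
      have h1 : ∑ (u : Unit), c (Sum.inl u) • u2 (Sum.inl u)
          = Sum.elim (c (Sum.inl ()) • x) (0 : Fin m → ℝ) := by
        rw [hu2def]
        simp only [Finset.univ_unique, Finset.sum_singleton]
        funext k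
        cases k <;> simp
      rw [h1, h2]
      funext k
      cases k <;> simp
    have hu2li : ∀ c : (Unit ⊕ Fin m) → ℝ, ∑ k, c k • u2 k = 0 → ∀ k, c k = 0 := by
      intro c h k
      rw [hu2sum] at h
      obtain ⟨h1, h2⟩ := ic_elim_eq_zero h
      have hc0 : c (Sum.inl ()) = 0 := by
        rcases smul_eq_zero.1 h1 with h | h
        · exact h
        · exact absurd h hx
      cases k with
      | inl u => cases u; exact hc0
      | inr j => exact congrFun h2 j
    set V2 := Submodule.span ℝ (Set.range fun k => Li *ᵥ u2 k) with hV2def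
    have hV2rank : finrank ℝ V2 = 1 + m := by
      rw [hV2def, finrank_span_eq_card (ic_li_map L Li hLLi u2 hu2li)]
      simp
    have hV2le : ∀ v ∈ V2, v ⬝ᵥ (K *ᵥ v) ≤ 0 := by
      intro v hv
      obtain ⟨c, -, hLv⟩ := ic_key L Li hLLi u2 v hv
      rw [hQ v, hLv, hu2sum, hBform]
      have h1 : (c (Sum.inl ()) • x) ⬝ᵥ (S *ᵥ (c (Sum.inl ()) • x))
          = c (Sum.inl ()) ^ 2 * (x ⬝ᵥ (S *ᵥ x)) := by
        rw [Matrix.mulVec_smul, smul_dotProduct, dotProduct_smul]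
        simp only [smul_eq_mul]
        ring
      rw [h1]
      have h2 := hDq0 fun j => c (Sum.inr j)
      nlinarith [sq_nonneg (c (Sum.inl ()))]
    -- the positive eigenspan
    set P := Finset.univ.filter (fun i => 0 < hK.eigenvalues i) with hPdef
    set Vp := Submodule.span ℝ
      (Set.range (fun j : P => (⇑(hK.eigenvectorBasis j) : (Fin n ⊕ Fin m) → ℝ))) with hVpdef
    have hVppos := ic_eig_span_posQ hK P (fun j hj => (Finset.mem_filter.1 hj).2)
    have hVprank : finrank ℝ Vp = n := by
      rw [hVpdef, finrank_span_eq_card (ic_eig_li hK P), Fintype.card_coe, hp]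
    have hfinal := ic_disjoint_le K Vp V2 hVppos hV2le
    rw [hVprank, hV2rank, hcard] at hfinal
    omega
  · -- posdef → inertia
    intro hSpd
    have hS2 : ∀ x : Fin n → ℝ, x ≠ 0 → 0 < x ⬝ᵥ (S *ᵥ x) := by
      intro x hx
      have := hSpd.dotProduct_mulVec_pos hx
      rwa [show star x = x from star_trivial x] at this
    -- positive subspace V1 of dimension n
    set V1 := Submodule.span ℝ (Set.range fun i => Li *ᵥ u1 i) with hV1def
    have hV1rank : finrank ℝ V1 = n := by
      rw [hV1def, finrank_span_eq_card (ic_li_map L Li hLLi u1 hu1li)]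
      simp
    have hV1pos : ∀ v ∈ V1, v ≠ 0 → 0 < v ⬝ᵥ (K *ᵥ v) := by
      intro v hv hv0
      obtain ⟨c, hvc, hLv⟩ := ic_key L Li hLLi u1 v hv
      have hc : c ≠ 0 := by
        rintro rfl
        simp at hvc
        exact hv0 hvc
      rw [hQ v, hLv, hu1def, ic_sum_single_inl, hBform]
      have h0 : (0 : Fin m → ℝ) ⬝ᵥ (D *ᵥ 0) = 0 := by simp
      rw [h0, sub_zero]
      exact hS2 c hc
    -- negative subspace of dimension m
    set u3 : Fin m → (Fin n ⊕ Fin m) → ℝ :=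
      fun j => (Pi.single (Sum.inr j) 1 : Fin n ⊕ Fin m → ℝ) with hu3def
    have hu3li : ∀ c : Fin m → ℝ, ∑ j, c j • u3 j = 0 → ∀ j, c j = 0 := by
      intro c h j
      rw [hu3def, ic_sum_single_inr] at h
      exact congrFun (ic_elim_eq_zero h).2 j
    set V3 := Submodule.span ℝ (Set.range fun j => Li *ᵥ u3 j) with hV3def
    have hV3rank : finrank ℝ V3 = m := by
      rw [hV3def, finrank_span_eq_card (ic_li_map L Li hLLi u3 hu3li)]
      simp
    have hV3neg : ∀ v ∈ V3, v ≠ 0 → v ⬝ᵥ (K *ᵥ v) < 0 := by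
      intro v hv hv0
      obtain ⟨c, hvc, hLv⟩ := ic_key L Li hLLi u3 v hv
      have hc : c ≠ 0 := by
        rintro rfl
        simp at hvc
        exact hv0 hvc
      rw [hQ v, hLv, hu3def, ic_sum_single_inr, hBform]
      have h0 : (0 : Fin n → ℝ) ⬝ᵥ (S *ᵥ 0) = 0 := by simp
      rw [h0, zero_sub]
      exact neg_lt_zero.mpr (hDqpos c hc)
    have hpge : n ≤ (Finset.univ.filter fun i => 0 < hK.eigenvalues i).card := by
      have h := ic_pos_count_ge hK V1 hV1pos
      omega
    have hqge : m ≤ (Finset.univ.filter fun i => hK.eigenvalues i < 0).card := by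
      have h := ic_neg_count_ge hK V3 hV3neg
      omega
    -- partition of eigenvalues
    have hpart : (Finset.univ.filter fun i => 0 < hK.eigenvalues i).card
        + (Finset.univ.filter fun i => hK.eigenvalues i < 0).card
        + (Finset.univ.filter fun i => hK.eigenvalues i = 0).card = n + m := by
      have hUnion : ((Finset.univ.filter fun i => 0 < hK.eigenvalues i)
          ∪ (Finset.univ.filter fun i => hK.eigenvalues i < 0))
          ∪ (Finset.univ.filter fun i => hK.eigenvalues i = 0)
          = (Finset.univ : Finset (Fin n ⊕ Fin m)) := by
        ext i
        simp only [Finset.mem_union, Finset.mem_filter, Finset.mem_univ, true_and, iff_true]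
        rcases lt_trichotomy (hK.eigenvalues i) 0 with h | h | h
        · exact Or.inl (Or.inr h)
        · exact Or.inr h
        · exact Or.inl (Or.inl h)
      have hd1 : Disjoint (Finset.univ.filter fun i => 0 < hK.eigenvalues i)
          (Finset.univ.filter fun i => hK.eigenvalues i < 0) := by
        rw [Finset.disjoint_left]
        intro i h1 h2
        simp only [Finset.mem_filter] at h1 h2
        exact absurd h1.2 (not_lt.2 h2.2.le)
      have hd2 : Disjoint ((Finset.univ.filter fun i => 0 < hK.eigenvalues i)
          ∪ (Finset.univ.filter fun i => hK.eigenvalues i < 0))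
          (Finset.univ.filter fun i => hK.eigenvalues i = 0) := by
        rw [Finset.disjoint_left]
        intro i h1 h2
        simp only [Finset.mem_union, Finset.mem_filter] at h1 h2
        rcases h1 with h | h
        · rw [h2.2] at h; exact lt_irrefl 0 h.2
        · rw [h2.2] at h; exact lt_irrefl 0 h.2
      have := Finset.card_union_of_disjoint hd2
      rw [hUnion, Finset.card_union_of_disjoint hd1] at this
      rw [← this, Finset.card_univ, hcard]
    refine ⟨?_, ?_, ?_⟩ <;> omega
end

section
/- Let W be an n×n real symmetric positive semidefinite matrix, J an m×n real matrix, S and Λ diagonal m×m matrices with strictly positive diagonal entries, and δₚ > 0, δ_d > 0. Then the full regularized symmetrized KKT matrix M = [[W + δₚI, 0, Jᵀ], [0, S⁻¹Λ, −I], [J, −I, −δ_d I]] (a symmetric (n+2m)×(n+2m) matrix written in 3×3 block form) has inertia (n+m, m, 0): exactly n+m positive eigenvalues, exactly m negative eigenvalues, and no zero eigenvalues. In particular, M is invertible. -/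
open Matrix

section KKTAux

open Finset Module

variable {ι : Type*} [Fintype ι] [DecidableEq ι] {A : Matrix ι ι ℝ} (hA : A.IsHermitian)

omit [DecidableEq ι] in
lemma kkt_dot_eq_inner (x y : EuclideanSpace ℝ ι) :
    (x : ι → ℝ) ⬝ᵥ (y : ι → ℝ) = inner ℝ x y := by
  simp [dotProduct, PiLp.inner_apply, RCLike.inner_apply, mul_comm]

lemma kkt_quad_sum {κ : Type*} [Fintype κ] (f : κ → ι) (hf : Function.Injective f) (c : κ → ℝ) :
    ((∑ i, c i • (hA.eigenvectorBasis (f i) : EuclideanSpace ℝ ι)) : ι → ℝ) ⬝ᵥ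
      (A *ᵥ ((∑ i, c i • (hA.eigenvectorBasis (f i) : EuclideanSpace ℝ ι)) : ι → ℝ)) =
    ∑ i, hA.eigenvalues (f i) * c i ^ 2 := by
  have horth : Orthonormal ℝ (fun i => hA.eigenvectorBasis (f i)) :=
    hA.eigenvectorBasis.orthonormal.comp f hf
  have hmul : A *ᵥ ((∑ i, c i • (hA.eigenvectorBasis (f i) : EuclideanSpace ℝ ι)) : ι → ℝ)
      = ((∑ i, (c i * hA.eigenvalues (f i)) • (hA.eigenvectorBasis (f i) : EuclideanSpace ℝ ι)) : ι → ℝ) := by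
    funext j
    simp only [mulVec, dotProduct, Finset.sum_apply, PiLp.smul_apply, Pi.smul_apply, smul_eq_mul, Finset.mul_sum]
    rw [Finset.sum_comm]
    refine Finset.sum_congr rfl fun i _ => ?_
    have h2 := congrFun (hA.mulVec_eigenvectorBasis (f i)) j
    simp only [mulVec, dotProduct, Pi.smul_apply, smul_eq_mul] at h2
    have h3 : ∑ x, A j x * (c i * hA.eigenvectorBasis (f i) x)
        = c i * ∑ x, A j x * hA.eigenvectorBasis (f i) x := by
      rw [Finset.mul_sum]; exact Finset.sum_congr rfl fun _ _ => by ring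
    rw [h3, h2]; ring
  rw [hmul, kkt_dot_eq_inner]
  simp only [WithLp.toLp_sum, WithLp.toLp_smul, WithLp.toLp_ofLp]
  rw [sum_inner]
  refine Finset.sum_congr rfl fun i _ => ?_
  rw [real_inner_smul_left, horth.inner_right_fintype]
  ring

lemma kkt_finrank_le_card_pos (V : Submodule ℝ (EuclideanSpace ℝ ι))
    (hV : ∀ x ∈ V, x ≠ 0 → 0 < (x : ι → ℝ) ⬝ᵥ (A *ᵥ (x : ι → ℝ))) :
    finrank ℝ V ≤ (Finset.univ.filter fun i => 0 < hA.eigenvalues i).card := by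
  classical
  set T : Finset ι := Finset.univ.filter (fun i => ¬ 0 < hA.eigenvalues i) with hT
  set v : ↥T → EuclideanSpace ℝ ι := fun i => hA.eigenvectorBasis i with hv
  have hvli : LinearIndependent ℝ v :=
    hA.eigenvectorBasis.orthonormal.linearIndependent.comp Subtype.val Subtype.val_injective
  set U := Submodule.span ℝ (Set.range v) with hU
  have hUdim : finrank ℝ U = T.card := by
    rw [hU, finrank_span_eq_card hvli, Fintype.card_coe]
  have hUq : ∀ x ∈ U, (x : ι → ℝ) ⬝ᵥ (A *ᵥ (x : ι → ℝ)) ≤ 0 := by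
    intro x hx
    obtain ⟨c, rfl⟩ := (Submodule.mem_span_range_iff_exists_fun ℝ).1 hx
    simp only [hv, WithLp.ofLp_sum, WithLp.ofLp_smul]
    rw [kkt_quad_sum hA Subtype.val Subtype.val_injective c]
    refine Finset.sum_nonpos fun i _ => ?_
    have hi : ¬ 0 < hA.eigenvalues ↑i := (Finset.mem_filter.1 i.2).2
    nlinarith [sq_nonneg (c i)]
  have hdisj : V ⊓ U = ⊥ := by
    rw [Submodule.eq_bot_iff]
    intro x ⟨hxV, hxU⟩
    by_contra hne
    exact absurd (hUq x hxU) (not_le.2 (hV x hxV hne))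
  have hdim := Submodule.finrank_sup_add_finrank_inf_eq V U
  rw [hdisj, finrank_bot, add_zero, hUdim] at hdim
  have hle : finrank ℝ ↥(V ⊔ U) ≤ Fintype.card ι := by
    simpa [finrank_euclideanSpace] using Submodule.finrank_le (V ⊔ U)
  have hcard : (Finset.univ.filter fun i => 0 < hA.eigenvalues i).card + T.card
      = Fintype.card ι := by
    rw [hT]
    simpa using Finset.card_filter_add_card_filter_not
      (s := (Finset.univ : Finset ι)) (p := fun i => 0 < hA.eigenvalues i)
  omega

lemma kkt_finrank_le_card_neg (V : Submodule ℝ (EuclideanSpace ℝ ι))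
    (hV : ∀ x ∈ V, x ≠ 0 → (x : ι → ℝ) ⬝ᵥ (A *ᵥ (x : ι → ℝ)) < 0) :
    finrank ℝ V ≤ (Finset.univ.filter fun i => hA.eigenvalues i < 0).card := by
  classical
  set T : Finset ι := Finset.univ.filter (fun i => ¬ hA.eigenvalues i < 0) with hT
  set v : ↥T → EuclideanSpace ℝ ι := fun i => hA.eigenvectorBasis i with hv
  have hvli : LinearIndependent ℝ v :=
    hA.eigenvectorBasis.orthonormal.linearIndependent.comp Subtype.val Subtype.val_injective
  set U := Submodule.span ℝ (Set.range v) with hU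
  have hUdim : finrank ℝ U = T.card := by
    rw [hU, finrank_span_eq_card hvli, Fintype.card_coe]
  have hUq : ∀ x ∈ U, 0 ≤ (x : ι → ℝ) ⬝ᵥ (A *ᵥ (x : ι → ℝ)) := by
    intro x hx
    obtain ⟨c, rfl⟩ := (Submodule.mem_span_range_iff_exists_fun ℝ).1 hx
    simp only [hv, WithLp.ofLp_sum, WithLp.ofLp_smul]
    rw [kkt_quad_sum hA Subtype.val Subtype.val_injective c]
    refine Finset.sum_nonneg fun i _ => ?_
    have hi : ¬ hA.eigenvalues ↑i < 0 := (Finset.mem_filter.1 i.2).2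
    nlinarith [sq_nonneg (c i)]
  have hdisj : V ⊓ U = ⊥ := by
    rw [Submodule.eq_bot_iff]
    intro x ⟨hxV, hxU⟩
    by_contra hne
    exact absurd (hUq x hxU) (not_le.2 (hV x hxV hne))
  have hdim := Submodule.finrank_sup_add_finrank_inf_eq V U
  rw [hdisj, finrank_bot, add_zero, hUdim] at hdim
  have hle : finrank ℝ ↥(V ⊔ U) ≤ Fintype.card ι := by
    simpa [finrank_euclideanSpace] using Submodule.finrank_le (V ⊔ U)
  have hcard : (Finset.univ.filter fun i => hA.eigenvalues i < 0).card + T.card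
      = Fintype.card ι := by
    rw [hT]
    simpa using Finset.card_filter_add_card_filter_not
      (s := (Finset.univ : Finset ι)) (p := fun i => hA.eigenvalues i < 0)
  omega

lemma kkt_quad_form (n m : ℕ)
    (W : Matrix (Fin n) (Fin n) ℝ)
    (J : Matrix (Fin m) (Fin n) ℝ)
    (s lam : Fin m → ℝ) (hs : ∀ i, 0 < s i)
    (δp δd : ℝ)
    (M : Matrix ((Fin n ⊕ Fin m) ⊕ Fin m) ((Fin n ⊕ Fin m) ⊕ Fin m) ℝ)
    (hM : M = Matrix.fromBlocks
        (Matrix.fromBlocks (W + δp • (1 : Matrix (Fin n) (Fin n) ℝ)) 0 0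
          ((Matrix.diagonal s)⁻¹ * Matrix.diagonal lam))
        (Matrix.fromRows Jᵀ (-1))
        (Matrix.fromCols J (-1))
        (-(δd • (1 : Matrix (Fin m) (Fin m) ℝ))))
    (u : Fin n → ℝ) (v w : Fin m → ℝ) :
    ((u ⊕ᵥ v) ⊕ᵥ w) ⬝ᵥ (M *ᵥ ((u ⊕ᵥ v) ⊕ᵥ w)) =
      u ⬝ᵥ (W *ᵥ u) + δp * (u ⬝ᵥ u) + (∑ j, (s j)⁻¹ * lam j * v j ^ 2)
        + 2 * ((J *ᵥ u) ⬝ᵥ w) - 2 * (v ⬝ᵥ w) - δd * (w ⬝ᵥ w) := by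
  have hdiag : (Matrix.diagonal s)⁻¹ * Matrix.diagonal lam
      = Matrix.diagonal (fun j => (s j)⁻¹ * lam j) := by
    have h1 : (Matrix.diagonal s)⁻¹ = Matrix.diagonal (fun j => (s j)⁻¹) := by
      apply Matrix.inv_eq_right_inv
      rw [Matrix.diagonal_mul_diagonal]
      have : (fun j => s j * (s j)⁻¹) = fun _ => (1 : ℝ) :=
        funext fun j => mul_inv_cancel₀ (hs j).ne'
      rw [this, Matrix.diagonal_one]
    rw [h1, Matrix.diagonal_mul_diagonal]
  subst hM
  rw [hdiag]
  have hbl : (((u ⊕ᵥ v) ⊕ᵥ w) : ((Fin n ⊕ Fin m) ⊕ Fin m) → ℝ) ∘ Sum.inl = u ⊕ᵥ v := rfl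
  have hbr : (((u ⊕ᵥ v) ⊕ᵥ w) : ((Fin n ⊕ Fin m) ⊕ Fin m) → ℝ) ∘ Sum.inr = w := rfl
  rw [fromBlocks_mulVec, hbl, hbr, fromBlocks_mulVec, Sum.elim_comp_inl, Sum.elim_comp_inr,
    fromRows_mulVec, fromCols_mulVec_sumElim]
  simp only [zero_mulVec, add_zero, zero_add, neg_mulVec, one_mulVec, add_mulVec,
    smul_mulVec]
  have helim : ∀ (a c : Fin n → ℝ) (b d : Fin m → ℝ),
      ((a ⊕ᵥ b) : (Fin n ⊕ Fin m) → ℝ) + (c ⊕ᵥ d) = (a + c) ⊕ᵥ (b + d) :=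
    fun a c b d => funext fun x => by cases x <;> rfl
  rw [helim, sumElim_dotProduct_sumElim, sumElim_dotProduct_sumElim]
  have h1 : u ⬝ᵥ (W *ᵥ u + δp • u + Jᵀ *ᵥ w)
      = u ⬝ᵥ (W *ᵥ u) + δp * (u ⬝ᵥ u) + (J *ᵥ u) ⬝ᵥ w := by
    rw [dotProduct_add, dotProduct_add, dotProduct_smul, Matrix.dotProduct_mulVec u Jᵀ w,
      vecMul_transpose, smul_eq_mul]
  have h2 : v ⬝ᵥ ((Matrix.diagonal fun j => (s j)⁻¹ * lam j) *ᵥ v + -w)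
      = (∑ j, (s j)⁻¹ * lam j * v j ^ 2) - v ⬝ᵥ w := by
    rw [dotProduct_add, dotProduct_neg, sub_eq_add_neg]
    congr 1
    simp only [dotProduct, mulVec_diagonal]
    exact Finset.sum_congr rfl fun j _ => by ring
  have h3 : w ⬝ᵥ (J *ᵥ u + -v + -(δd • w))
      = (J *ᵥ u) ⬝ᵥ w - v ⬝ᵥ w - δd * (w ⬝ᵥ w) := by
    rw [dotProduct_add, dotProduct_add, dotProduct_neg, dotProduct_neg, dotProduct_smul,
      smul_eq_mul, dotProduct_comm w (J *ᵥ u), dotProduct_comm w v]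
    ring
  rw [h1, h2, h3]
  ring

end KKTAux

/-- For `W` positive semidefinite, positive diagonal `S`, `Λ`, and `δₚ, δ_d > 0`, the full
regularized symmetrized KKT matrix
`M = [[W + δₚI, 0, Jᵀ], [0, S⁻¹Λ, −I], [J, −I, −δ_d I]]` has inertia `(n+m, m, 0)`;
in particular `M` is invertible. -/
theorem full_kkt_inertia (n m : ℕ)
    (W : Matrix (Fin n) (Fin n) ℝ) (hW : W.PosSemidef)
    (J : Matrix (Fin m) (Fin n) ℝ)
    (s lam : Fin m → ℝ) (hs : ∀ i, 0 < s i) (hlam : ∀ i, 0 < lam i)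
    (S Λ : Matrix (Fin m) (Fin m) ℝ)
    (hS : S = Matrix.diagonal s) (hΛ : Λ = Matrix.diagonal lam)
    (δp δd : ℝ) (hδp : 0 < δp) (hδd : 0 < δd)
    (M : Matrix ((Fin n ⊕ Fin m) ⊕ Fin m) ((Fin n ⊕ Fin m) ⊕ Fin m) ℝ)
    (hM : M = Matrix.fromBlocks
        (Matrix.fromBlocks (W + δp • (1 : Matrix (Fin n) (Fin n) ℝ)) 0 0 (S⁻¹ * Λ))
        (Matrix.fromRows Jᵀ (-1))
        (Matrix.fromCols J (-1))
        (-(δd • (1 : Matrix (Fin m) (Fin m) ℝ))))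
    (hMherm : M.IsHermitian) :
    (Finset.univ.filter fun i => 0 < hMherm.eigenvalues i).card = n + m ∧
    (Finset.univ.filter fun i => hMherm.eigenvalues i < 0).card = m ∧
    (Finset.univ.filter fun i => hMherm.eigenvalues i = 0).card = 0 ∧
    IsUnit M.det := by
  classical
  subst hS hΛ
  have hqf := kkt_quad_form n m W J s lam hs δp δd M hM
  -- the positive-definite subspace: kernel of the linear map `x ↦ δd • w - J u + v`
  let L : EuclideanSpace ℝ ((Fin n ⊕ Fin m) ⊕ Fin m) →ₗ[ℝ] (Fin m → ℝ) :=
    { toFun := fun x => fun j => δd * x (Sum.inr j)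
        - (J *ᵥ fun i => x (Sum.inl (Sum.inl i))) j + x (Sum.inl (Sum.inr j))
      map_add' := fun x y => by
        funext j
        have h : (J *ᵥ fun i => (x + y) (Sum.inl (Sum.inl i))) j
            = (J *ᵥ fun i => x (Sum.inl (Sum.inl i))) j
              + (J *ᵥ fun i => y (Sum.inl (Sum.inl i))) j := by
          rw [show (fun i => (x + y) (Sum.inl (Sum.inl i)))
              = (fun i => x (Sum.inl (Sum.inl i))) + (fun i => y (Sum.inl (Sum.inl i))) from rfl,
            mulVec_add, Pi.add_apply]
        show δd * (x + y) (Sum.inr j) - (J *ᵥ fun i => (x + y) (Sum.inl (Sum.inl i))) j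
            + (x + y) (Sum.inl (Sum.inr j)) = _
        rw [h]
        simp only [PiLp.add_apply, Pi.add_apply]
        ring
      map_smul' := fun a x => by
        funext j
        have h : (J *ᵥ fun i => (a • x) (Sum.inl (Sum.inl i))) j
            = a * (J *ᵥ fun i => x (Sum.inl (Sum.inl i))) j := by
          rw [show (fun i => (a • x) (Sum.inl (Sum.inl i)))
              = a • (fun i => x (Sum.inl (Sum.inl i))) from rfl,
            mulVec_smul, Pi.smul_apply, smul_eq_mul]
        show δd * (a • x) (Sum.inr j) - (J *ᵥ fun i => (a • x) (Sum.inl (Sum.inl i))) j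
            + (a • x) (Sum.inl (Sum.inr j)) = _
        rw [h]
        simp only [PiLp.smul_apply, Pi.smul_apply, smul_eq_mul, RingHom.id_apply]
        ring }
    -- surjectivity of L
  have hLsurj : Function.Surjective L := by
    intro y
    refine ⟨WithLp.toLp 2 (((0 : Fin n → ℝ) ⊕ᵥ (0 : Fin m → ℝ)) ⊕ᵥ (δd⁻¹ • y) :
      ((Fin n ⊕ Fin m) ⊕ Fin m) → ℝ), ?_⟩
    funext j
    show δd * (δd⁻¹ • y) j - (J *ᵥ fun _ => (0 : ℝ)) j + 0 = y j
    have : (fun _ : Fin n => (0 : ℝ)) = (0 : Fin n → ℝ) := rfl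
    rw [this, mulVec_zero]
    simp only [Pi.zero_apply, sub_zero, add_zero, Pi.smul_apply, smul_eq_mul]
    field_simp
  have hdom : Module.finrank ℝ (EuclideanSpace ℝ ((Fin n ⊕ Fin m) ⊕ Fin m)) = n + m + m := by
    simp [finrank_euclideanSpace]
  have hrank := LinearMap.finrank_range_add_finrank_ker L
  rw [LinearMap.range_eq_top.2 hLsurj, finrank_top, hdom] at hrank
  have hcod : Module.finrank ℝ (Fin m → ℝ) = m := by simp
  have hker : Module.finrank ℝ (LinearMap.ker L) = n + m := by omega
  -- q is positive definite on ker L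
  have hpos : ∀ x ∈ LinearMap.ker L, x ≠ 0 →
      0 < (x : ((Fin n ⊕ Fin m) ⊕ Fin m) → ℝ) ⬝ᵥ (M *ᵥ (x : ((Fin n ⊕ Fin m) ⊕ Fin m) → ℝ)) := by
    intro x hx hne
    set u : Fin n → ℝ := fun i => x (Sum.inl (Sum.inl i)) with hu
    set v : Fin m → ℝ := fun j => x (Sum.inl (Sum.inr j)) with hv
    set w : Fin m → ℝ := fun j => x (Sum.inr j) with hw
    have hxe : (x : ((Fin n ⊕ Fin m) ⊕ Fin m) → ℝ) = (u ⊕ᵥ v) ⊕ᵥ w :=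
      funext fun i => by rcases i with (i | j) | k <;> rfl
    have hker0 : J *ᵥ u = δd • w + v := by
      have h0 := LinearMap.mem_ker.1 hx
      funext j
      have hj := congrFun h0 j
      simp only [Pi.zero_apply] at hj
      have hj' : δd * w j - (J *ᵥ u) j + v j = 0 := hj
      simp only [Pi.add_apply, Pi.smul_apply, smul_eq_mul]
      linarith
    rw [hxe, hqf u v w]
    have hJu : (J *ᵥ u) ⬝ᵥ w = δd * (w ⬝ᵥ w) + v ⬝ᵥ w := by
      rw [hker0, add_dotProduct, smul_dotProduct, smul_eq_mul]
    rw [hJu]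
    have hWu : 0 ≤ u ⬝ᵥ (W *ᵥ u) := by simpa using hW.dotProduct_mulVec_nonneg u
    have huu : 0 ≤ u ⬝ᵥ u := Finset.sum_nonneg fun i _ => mul_self_nonneg _
    have hww : 0 ≤ w ⬝ᵥ w := Finset.sum_nonneg fun i _ => mul_self_nonneg _
    have hvsum : 0 ≤ ∑ j, (s j)⁻¹ * lam j * v j ^ 2 :=
      Finset.sum_nonneg fun j _ =>
        mul_nonneg (mul_nonneg (inv_nonneg.2 (hs j).le) (hlam j).le) (sq_nonneg _)
    have hone : u ≠ 0 ∨ v ≠ 0 ∨ w ≠ 0 := by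
      by_contra hcon
      push_neg at hcon
      obtain ⟨h1, h2, h3⟩ := hcon
      apply hne
      have : (x : ((Fin n ⊕ Fin m) ⊕ Fin m) → ℝ) = 0 := by
        rw [hxe, h1, h2, h3]
        funext i
        rcases i with (i | j) | k <;> rfl
      exact WithLp.ofLp_injective 2 this
    rcases hone with h | h | h
    · have hupos : 0 < u ⬝ᵥ u :=
        lt_of_le_of_ne huu fun hc => h (dotProduct_self_eq_zero.1 hc.symm)
      nlinarith
    · obtain ⟨j, hj⟩ := Function.ne_iff.1 h
      have hterm : 0 < (s j)⁻¹ * lam j * v j ^ 2 :=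
        mul_pos (mul_pos (inv_pos.2 (hs j)) (hlam j)) (pow_two_pos_of_ne_zero hj)
      have hvpos : 0 < ∑ j, (s j)⁻¹ * lam j * v j ^ 2 :=
        Finset.sum_pos' (fun j _ =>
          mul_nonneg (mul_nonneg (inv_nonneg.2 (hs j).le) (hlam j).le) (sq_nonneg _))
          ⟨j, Finset.mem_univ j, hterm⟩
      nlinarith
    · have hwpos : 0 < w ⬝ᵥ w :=
        lt_of_le_of_ne hww fun hc => h (dotProduct_self_eq_zero.1 hc.symm)
      nlinarith
  -- the negative-definite subspace: vectors supported on the last block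
  let R : (Fin m → ℝ) →ₗ[ℝ] EuclideanSpace ℝ ((Fin n ⊕ Fin m) ⊕ Fin m) :=
    { toFun := fun w => WithLp.toLp 2 (((0 : Fin n → ℝ) ⊕ᵥ (0 : Fin m → ℝ)) ⊕ᵥ w :
        ((Fin n ⊕ Fin m) ⊕ Fin m) → ℝ)
      map_add' := fun a b => WithLp.ofLp_injective 2 <| funext fun i => by
        rcases i with (i | j) | k <;> simp [PiLp.add_apply]
      map_smul' := fun a x => WithLp.ofLp_injective 2 <| funext fun i => by
        rcases i with (i | j) | k <;> simp [PiLp.smul_apply] }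
  have hRinj : Function.Injective R := by
    intro a b hab
    funext j
    exact congrFun (congrArg WithLp.ofLp hab) (Sum.inr j)
  have hRdim : Module.finrank ℝ (LinearMap.range R) = m := by
    rw [LinearMap.finrank_range_of_inj hRinj, hcod]
  have hneg : ∀ x ∈ LinearMap.range R, x ≠ 0 →
      (x : ((Fin n ⊕ Fin m) ⊕ Fin m) → ℝ) ⬝ᵥ (M *ᵥ (x : ((Fin n ⊕ Fin m) ⊕ Fin m) → ℝ)) < 0 := by
    intro x hx hne
    obtain ⟨w, rfl⟩ := hx
    have hre : ((R w : EuclideanSpace ℝ ((Fin n ⊕ Fin m) ⊕ Fin m)) :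
        ((Fin n ⊕ Fin m) ⊕ Fin m) → ℝ) = ((0 : Fin n → ℝ) ⊕ᵥ (0 : Fin m → ℝ)) ⊕ᵥ w := rfl
    rw [hre, hqf 0 0 w]
    have hwne : w ≠ 0 := by
      intro hw0
      apply hne
      rw [hw0]
      exact map_zero R
    have hwpos : 0 < w ⬝ᵥ w :=
      lt_of_le_of_ne (Finset.sum_nonneg fun i _ => mul_self_nonneg _)
        fun hc => hwne (dotProduct_self_eq_zero.1 hc.symm)
    simp only [mulVec_zero, dotProduct_zero, zero_dotProduct, dotProduct_comm]
    have hz : (∑ j, (s j)⁻¹ * lam j * (0 : Fin m → ℝ) j ^ 2) = 0 := by simp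
    rw [hz]
    nlinarith
  -- assemble the counts
  have hple := kkt_finrank_le_card_pos hMherm (LinearMap.ker L) hpos
  rw [hker] at hple
  have hnle := kkt_finrank_le_card_neg hMherm (LinearMap.range R) hneg
  rw [hRdim] at hnle
  set P1 := Finset.univ.filter fun i => 0 < hMherm.eigenvalues i with hP1
  set P2 := Finset.univ.filter fun i => hMherm.eigenvalues i < 0 with hP2
  set P3 := Finset.univ.filter fun i => hMherm.eigenvalues i = 0 with hP3
  have hd12 : Disjoint P1 P2 := Finset.disjoint_left.2 fun a h1 h2 =>
    absurd (Finset.mem_filter.1 h2).2 (not_lt.2 (Finset.mem_filter.1 h1).2.le)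
  have hd13 : Disjoint P1 P3 := Finset.disjoint_left.2 fun a h1 h2 =>
    absurd (Finset.mem_filter.1 h2).2 (Finset.mem_filter.1 h1).2.ne'
  have hd23 : Disjoint P2 P3 := Finset.disjoint_left.2 fun a h1 h2 =>
    absurd (Finset.mem_filter.1 h2).2 (Finset.mem_filter.1 h1).2.ne
  have hsumle : P1.card + P2.card + P3.card ≤ n + m + m := by
    rw [← Finset.card_union_of_disjoint hd12,
      ← Finset.card_union_of_disjoint (Finset.disjoint_union_left.2 ⟨hd13, hd23⟩)]
    calc ((P1 ∪ P2) ∪ P3).card ≤ Fintype.card ((Fin n ⊕ Fin m) ⊕ Fin m) :=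
          Finset.card_le_univ _
      _ = n + m + m := by simp
  have hp : P1.card = n + m := by omega
  have hq : P2.card = m := by omega
  have hz : P3.card = 0 := by omega
  refine ⟨hp, hq, hz, ?_⟩
  have hne0 : ∀ i, hMherm.eigenvalues i ≠ 0 := by
    intro i hi
    have hmem : i ∈ P3 := Finset.mem_filter.2 ⟨Finset.mem_univ _, hi⟩
    rw [Finset.card_eq_zero.1 hz] at hmem
    exact absurd hmem (Finset.notMem_empty i)
  have hdet : M.det = ∏ i, hMherm.eigenvalues i := by
    simpa using hMherm.det_eq_prod_eigenvalues
  rw [hdet]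
  exact isUnit_iff_ne_zero.2 (Finset.prod_ne_zero_iff.2 fun i _ => hne0 i)
end
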